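/- Let W be a finite Weyl group with set of positive roots Φ₊ and longest element w₀ of length ℓ. Let (i_k)_{k∈ℤ} be a sequence in I such that (i_k, i_{k+1}, …, i_{k+ℓ−1}) is a reduced expression of w₀ for every k ∈ ℤ. Then i_{k+ℓ} = i_k* for all k, where i* is determined by α_{i*} = −w₀(α_i); in particular the sequence is periodic of period 2ℓ. -/

import Mathlib

open CoxeterSystem List


structure EtaG (W : Type*) where
  fn : W → ZMod 2
  el : W

namespace EtaG
variable {W : Type*} [Group W]

instance : Mul (EtaG W) := ⟨fun x y => ⟨fun t => x.fn t + y.fn (x.el⁻¹ * t * x.el), x.el * y.el⟩⟩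
instance : One (EtaG W) := ⟨⟨0, 1⟩⟩
instance : Inv (EtaG W) := ⟨fun x => ⟨fun t => x.fn (x.el * t * x.el⁻¹), x.el⁻¹⟩⟩

@[simp] theorem mul_fn (x y : EtaG W) (t : W) :
    (x * y).fn t = x.fn t + y.fn (x.el⁻¹ * t * x.el) := rfl
@[simp] theorem mul_el (x y : EtaG W) : (x * y).el = x.el * y.el := rfl
@[simp] theorem one_fn (t : W) : (1 : EtaG W).fn t = 0 := rfl
@[simp] theorem one_el : (1 : EtaG W).el = 1 := rfl

omit [Group W] in
theorem ext' {x y : EtaG W} (h1 : x.fn = y.fn) (h2 : x.el = y.el) : x = y := by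
  cases x; cases y; simp_all

instance : Group (EtaG W) where
  mul_assoc a b c := by
    refine ext' (funext fun t => ?_) ?_
    · simp [mul_assoc, mul_inv_rev, add_assoc]
    · simp [mul_assoc]
  one_mul a := by refine ext' (funext fun t => ?_) ?_ <;> simp
  mul_one a := by refine ext' (funext fun t => ?_) ?_ <;> simp
  inv_mul_cancel a := by
    refine ext' (funext fun t => ?_) ?_
    · show a.fn _ + a.fn _ = _
      rw [show a⁻¹.el⁻¹ * t * a⁻¹.el = a.el * t * a.el⁻¹ from by
        show (a.el⁻¹)⁻¹ * t * a.el⁻¹ = _; group]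
      exact CharTwo.add_self_eq_zero _
    · exact inv_mul_cancel a.el

/-- Projection to the group part, as a homomorphism. -/
def elHom : EtaG W →* W where
  toFun := el
  map_one' := rfl
  map_mul' _ _ := rfl

theorem pow_fn (x : EtaG W) (n : ℕ) (t : W) :
    (x ^ n).fn t = ∑ r ∈ Finset.range n, x.fn ((x.el ^ r)⁻¹ * t * x.el ^ r) := by
  induction n generalizing t with
  | zero => simp [pow_zero]
  | succ n ih =>
    rw [pow_succ', mul_fn, ih, Finset.sum_range_succ', add_comm]
    congr 1
    · apply Finset.sum_congr rfl
      intro r _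
      congr 1
      rw [pow_succ]
      group
    · simp

theorem pow_el (x : EtaG W) (n : ℕ) : (x ^ n).el = x.el ^ n := elHom.map_pow x n

end EtaG

namespace StmtAux
open scoped Classical
variable {B : Type*} {W : Type*} [Group W] {M : CoxeterMatrix B} (cs : CoxeterSystem M W)

local prefix:100 "s" => cs.simple
local prefix:100 "π" => cs.wordProd
local prefix:100 "ℓ" => cs.length

/-- The indicator function of `x`, valued in `ZMod 2`. -/
noncomputable def dlt (x t : W) : ZMod 2 := if t = x then 1 else 0

theorem dlt_congr {x t y u : W} (h : (t = x) ↔ (u = y)) : dlt x t = dlt y u := by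
  unfold dlt
  split_ifs with h1 h2 <;> tauto

theorem dlt_self (x : W) : dlt x x = 1 := by simp [dlt]

noncomputable def etaGen : B → EtaG W := fun i => ⟨dlt (s i), s i⟩

theorem conj_eq_iff {G : Type*} [Group G] {a b z t : G} :
    a * t * b = z ↔ t = a⁻¹ * z * b⁻¹ := by
  constructor
  · intro h
    rw [← h]
    simp [mul_assoc]
  · intro h
    rw [h]
    simp [mul_assoc]

private lemma sum_double {β : Type*} [AddCommMonoid β] (f : ℕ → β) (m : ℕ) :
    ∑ q ∈ Finset.range (2*m), f q = ∑ r ∈ Finset.range m, (f (2*r) + f (2*r+1)) := by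
  induction m with
  | zero => simp
  | succ m ih =>
    rw [Finset.sum_range_succ, ← ih, show 2*(m+1) = (2*m+1)+1 by omega,
      Finset.sum_range_succ, Finset.sum_range_succ, add_assoc]

theorem etaGen_liftable : M.IsLiftable (etaGen cs) := by
  intro i j
  rcases Nat.eq_zero_or_pos (M i j) with h0 | hpos
  · rw [h0, pow_zero]
  set m := M i j with hm
  set p : W := s i * s j with hp
  have hpm : p ^ m = 1 := cs.simple_mul_simple_pow i j
  have hp2m : p ^ (2 * m) = 1 := by rw [two_mul, pow_add, hpm, one_mul]
  have key : ∀ n : ℕ, p ^ n * s i * p ^ n = s i := by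
    intro n
    induction n with
    | zero => simp
    | succ n ih =>
      have h1 : p * s i * p = s i := by
        rw [hp]
        simp only [mul_assoc, cs.simple_mul_simple_cancel_left,
          cs.simple_mul_simple_self, mul_one]
      calc p ^ (n+1) * s i * p ^ (n+1)
          = p ^ n * (p * s i * p) * p ^ n := by rw [pow_succ]; group
        _ = s i := by rw [h1, ih]
  -- consequence : s i * (p ^ n)⁻¹ = p ^ n * s i
  have swap : ∀ n : ℕ, s i * (p ^ n)⁻¹ = p ^ n * s i := by
    intro n
    exact mul_inv_eq_iff_eq_mul.mpr (key n).symm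
  have conj1 : ∀ r : ℕ, p ^ r * s i * (p ^ r)⁻¹ = p ^ (2*r) * s i := by
    intro r
    rw [mul_assoc, swap r, two_mul, pow_add, mul_assoc]
  have conj2 : ∀ r : ℕ, p ^ r * (s i * s j * s i) * (p ^ r)⁻¹ = p ^ (2*r+1) * s i := by
    intro r
    have h1 : s i * s j * s i = p * s i := by rw [hp]
    rw [h1, show p ^ r * (p * s i) * (p ^ r)⁻¹ = p ^ (r+1) * (s i * (p ^ r)⁻¹) from by
      rw [pow_succ]; group, swap r, show p ^ (r+1) * (p ^ r * s i) = p ^ (2*r+1) * s i from by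
      rw [show 2*r+1 = (r+1)+r by omega, pow_add]; group]
  apply EtaG.ext'
  case h2 =>
    rw [EtaG.pow_el]
    exact hpm
  funext t
  rw [EtaG.pow_fn, EtaG.one_fn]
  have hxel : (etaGen cs i * etaGen cs j).el = p := rfl
  simp only [hxel]
  have hterm : ∀ r : ℕ, (etaGen cs i * etaGen cs j).fn ((p ^ r)⁻¹ * t * p ^ r)
      = dlt (p ^ (2*r) * s i) t + dlt (p ^ (2*r+1) * s i) t := by
    intro r
    rw [EtaG.mul_fn]
    show dlt (s i) _ + dlt (s j) _ = _
    congr 1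
    · refine dlt_congr ?_
      rw [conj_eq_iff, inv_inv, conj1]
    · refine dlt_congr ?_
      show (etaGen cs i).el⁻¹ * ((p ^ r)⁻¹ * t * p ^ r) * (etaGen cs i).el = s j ↔ _
      rw [show (etaGen cs i).el = s i from rfl, conj_eq_iff, conj_eq_iff,
        inv_inv, inv_inv, cs.inv_simple, conj2]
  rw [Finset.sum_congr rfl fun r _ => hterm r, ← sum_double (fun q => dlt (p ^ q * s i) t) m]
  -- now a sum over range (2*m) of q ↦ dlt (p^q * s i) t
  have hfix : ∀ q : ℕ, dlt (p ^ ((q + m) % (2*m)) * s i) t = dlt (p ^ q * s i) t := by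
    intro q
    have : p ^ ((q + m) % (2*m)) = p ^ q := by
      rw [← pow_eq_pow_mod (q+m) hp2m, pow_add, hpm, mul_one]
    rw [this]
  refine Finset.sum_involution (fun q _ => (q + m) % (2*m)) ?_ ?_ ?_ ?_
  · intro q hq
    show dlt (p ^ q * s i) t + dlt (p ^ ((q + m) % (2*m)) * s i) t = 0
    rw [hfix q]
    exact CharTwo.add_self_eq_zero _
  · intro q hq _
    simp only [Finset.mem_range] at hq
    show (q + m) % (2*m) ≠ q
    rcases Nat.lt_or_ge q m with h | h
    · rw [Nat.mod_eq_of_lt (by omega)]; omega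
    · rw [Nat.mod_eq_sub_mod (by omega), Nat.mod_eq_of_lt (by omega)]; omega
  · intro q hq
    simp only [Finset.mem_range] at hq ⊢
    exact Nat.mod_lt _ (by omega)
  · intro q hq
    simp only [Finset.mem_range] at hq
    show ((q + m) % (2*m) + m) % (2*m) = q
    rw [Nat.mod_add_mod, show q + m + m = q + 2*m by omega, Nat.add_mod_right,
      Nat.mod_eq_of_lt hq]

/-- The crossed homomorphism recording, for each reduced word, the parity with which
a given element occurs in the left inversion sequence. -/
noncomputable def eta (w : W) : W → ZMod 2 := (cs.lift ⟨etaGen cs, etaGen_liftable cs⟩ w).fn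

theorem eta_el (w : W) : (cs.lift ⟨etaGen cs, etaGen_liftable cs⟩ w).el = w := by
  have : EtaG.elHom.comp (cs.lift ⟨etaGen cs, etaGen_liftable cs⟩) = MonoidHom.id W := by
    apply cs.ext_simple
    intro i
    simp only [MonoidHom.comp_apply, MonoidHom.id_apply, cs.lift_apply_simple]
    rfl
  calc (cs.lift ⟨etaGen cs, etaGen_liftable cs⟩ w).el
      = EtaG.elHom.comp (cs.lift ⟨etaGen cs, etaGen_liftable cs⟩) w := rfl
    _ = w := by rw [this]; rfl

theorem eta_mul (u v t : W) : eta cs (u * v) t = eta cs u t + eta cs v (u⁻¹ * t * u) := by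
  unfold eta
  rw [map_mul, EtaG.mul_fn, eta_el]

theorem eta_simple (i : B) : eta cs (s i) = dlt (s i) := by
  unfold eta
  rw [cs.lift_apply_simple]
  rfl

theorem eta_one (t : W) : eta cs 1 t = 0 := by
  unfold eta
  rw [map_one]
  rfl

theorem eta_inv (u t : W) : eta cs u⁻¹ t = eta cs u (u * t * u⁻¹) := by
  have h := eta_mul cs u u⁻¹ (u * t * u⁻¹)
  rw [mul_inv_cancel, eta_one] at h
  rw [show u⁻¹ * (u * t * u⁻¹) * u = t from by group] at h
  have := eq_neg_of_add_eq_zero_right h.symm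
  rw [this, CharTwo.neg_eq]

theorem eta_mem (ω : List B) (hω : cs.IsReduced ω) (t : W) :
    eta cs (π ω) t = if t ∈ cs.leftInvSeq ω then 1 else 0 := by
  induction ω using List.reverseRecOn generalizing t with
  | nil =>
    simp only [wordProd_nil, leftInvSeq_nil, List.not_mem_nil, if_false]
    exact eta_one cs t
  | append_singleton ω i ih =>
    have hω' : cs.IsReduced ω := by
      have := hω.take ω.length
      simpa using this
    have hconcat : ω ++ [i] = ω.concat i := (List.concat_eq_append (as := ω) (a := i)).symm
    have hlis : cs.leftInvSeq (ω ++ [i])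
        = cs.leftInvSeq ω ++ [π ω * s i * (π ω)⁻¹] := by
      rw [hconcat, cs.leftInvSeq_concat, List.concat_eq_append]
    have hnd : (cs.leftInvSeq (ω ++ [i])).Nodup := hω.nodup_leftInvSeq
    rw [cs.wordProd_append, cs.wordProd_singleton, eta_mul, ih hω', eta_simple]
    have hdlt : dlt (s i) ((π ω)⁻¹ * t * π ω)
        = if t = π ω * s i * (π ω)⁻¹ then 1 else 0 := by
      rw [show dlt (s i) ((π ω)⁻¹ * t * π ω)
          = dlt (π ω * s i * (π ω)⁻¹) t from dlt_congr (by rw [conj_eq_iff, inv_inv])]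
      unfold dlt
      split_ifs with h1 h2 <;> tauto
    rw [hdlt, hlis]
    set X := π ω * s i * (π ω)⁻¹ with hX
    have hmem : t ∈ cs.leftInvSeq ω ++ [X] ↔ t ∈ cs.leftInvSeq ω ∨ t = X := by
      simp
    have hnot : ¬(t ∈ cs.leftInvSeq ω ∧ t = X) := by
      rintro ⟨h1, rfl⟩
      rw [hlis] at hnd
      exact (List.disjoint_of_nodup_append hnd) h1 (List.mem_singleton_self X)
    by_cases h1 : t ∈ cs.leftInvSeq ω
    · have h2 : t ≠ X := fun h => hnot ⟨h1, h⟩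
      rw [if_pos h1, if_neg h2, if_pos (hmem.mpr (Or.inl h1)), add_zero]
    · rw [if_neg h1]
      by_cases h2 : t = X
      · rw [if_pos h2, if_pos (hmem.mpr (Or.inr h2)), zero_add]
      · rw [if_neg h2, if_neg (fun h => by rcases hmem.mp h with h | h <;> tauto), zero_add]

theorem eta_refl_self {t : W} (ht : cs.IsReflection t) : eta cs t t = 1 := by
  obtain ⟨u, i, rfl⟩ := ht
  set t := u * s i * u⁻¹ with hT
  have h1 : eta cs t t = eta cs u t + eta cs (s i * u⁻¹) (u⁻¹ * t * u) := by
    rw [← eta_mul]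
    congr 1
    rw [hT]
    group
  have h2 : u⁻¹ * t * u = s i := by rw [hT]; group
  have h3 : eta cs (s i * u⁻¹) (s i) = eta cs (s i) (s i) + eta cs u⁻¹ ((s i)⁻¹ * s i * s i) := by
    rw [← eta_mul]
  have h4 : (s i)⁻¹ * s i * s i = s i := by group
  have h5 : eta cs u⁻¹ (s i) = eta cs u t := by
    rw [eta_inv]
  have h6 : eta cs (s i) (s i) = 1 := by rw [eta_simple]; exact dlt_self _
  rw [h1, h2, h3, h4, h5, h6]
  have hz : eta cs u t + eta cs u t = 0 := CharTwo.add_self_eq_zero _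
  linear_combination hz

theorem eta_eq_one_iff {t : W} (ht : cs.IsReflection t) (w : W) :
    eta cs w t = 1 ↔ ℓ (t * w) < ℓ w := by
  constructor
  · intro h
    obtain ⟨ω, hred, rfl⟩ := cs.exists_reduced_word' w
    rw [eta_mem cs ω hred] at h
    split_ifs at h with hmem
    · exact (cs.isLeftInversion_of_mem_leftInvSeq hred hmem).2
    · exact absurd h (by decide)
  · intro hlt
    by_contra h
    have h0 : eta cs w t = 0 := by
      have h2 : ∀ x : ZMod 2, x = 0 ∨ x = 1 := by decide
      rcases h2 (eta cs w t) with h' | h' <;> tauto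
    have h1 : eta cs (t * w) t = 1 := by
      rw [eta_mul, eta_refl_self cs ht, show t⁻¹ * t * t = t from by group, h0]
      ring
    have h3 : ℓ (t * (t * w)) < ℓ (t * w) := by
      obtain ⟨ω, hred, hw⟩ := cs.exists_reduced_word' (t * w)
      rw [hw] at h1 ⊢
      rw [eta_mem cs ω hred] at h1
      split_ifs at h1 with hmem
      · exact (cs.isLeftInversion_of_mem_leftInvSeq hred hmem).2
      · exact absurd h1 (by decide)
    rw [← mul_assoc, ht.mul_self, one_mul] at h3
    omega

theorem longest_square {w₀ : W} (hw₀ : ∀ w : W, ℓ w ≤ ℓ w₀) : w₀ * w₀ = 1 := by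
  have hdesc : ∀ t : W, cs.IsReflection t → eta cs w₀ t = 1 := by
    intro t ht
    rw [eta_eq_one_iff cs ht]
    exact lt_of_le_of_ne (hw₀ (t * w₀)) (ht.length_mul_right_ne w₀)
  by_contra h
  obtain ⟨i, hi⟩ := cs.exists_leftDescent_of_ne_one h
  have h1 : eta cs (w₀ * w₀) (s i) = 1 :=
    (eta_eq_one_iff cs (cs.isReflection_simple i) _).mpr hi
  have h2 : cs.IsReflection (w₀⁻¹ * s i * w₀) := by
    have := (cs.isReflection_simple i).conj w₀⁻¹
    rwa [inv_inv] at this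
  rw [eta_mul, hdesc _ (cs.isReflection_simple i), hdesc _ h2] at h1
  exact absurd h1 (by decide)

end StmtAux


namespace StmtAux2
open scoped Classical
variable {B : Type*} (M : CoxeterMatrix B)

/-- The standard bilinear form coefficients. -/
noncomputable def CM (k l : B) : ℝ := -Real.cos (Real.pi / (M k l))

theorem CM_diag (k : B) : CM M k k = 1 := by
  rw [CM, M.diagonal k]
  norm_num [Real.cos_pi]

theorem CM_symm (k l : B) : CM M k l = CM M l k := by
  rw [CM, CM, M.symmetric k l]

/-- The linear functional `v ↦ B(αₖ, v)`. -/
noncomputable def bf (k : B) : (B →₀ ℝ) →ₗ[ℝ] ℝ := Finsupp.linearCombination ℝ (CM M k)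

theorem bf_single (k l : B) : bf M k (Finsupp.single l 1) = CM M k l := by
  rw [bf, Finsupp.linearCombination_single, one_smul]

/-- The reflection attached to `k`. -/
noncomputable def sig (k : B) : (B →₀ ℝ) →ₗ[ℝ] (B →₀ ℝ) where
  toFun v := v - (2 * bf M k v) • Finsupp.single k 1
  map_add' u v := by
    simp only [map_add]
    rw [mul_add, add_smul]
    abel
  map_smul' r v := by
    simp only [map_smul, RingHom.id_apply, smul_eq_mul, smul_sub, smul_smul]
    ring_nf

theorem sig_apply (k : B) (v : B →₀ ℝ) :
    sig M k v = v - (2 * bf M k v) • Finsupp.single k 1 := rfl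

theorem sig_sq (k : B) (v : B →₀ ℝ) : sig M k (sig M k v) = v := by
  rw [sig_apply, sig_apply, map_sub, map_smul, bf_single, CM_diag]
  rw [smul_eq_mul, mul_one]
  rw [show 2 * (bf M k v - 2 * bf M k v) = -(2 * bf M k v) by ring, neg_smul]
  abel

/-- The reflection attached to `k`, as a linear equivalence. -/
noncomputable def sigE (k : B) : (B →₀ ℝ) ≃ₗ[ℝ] (B →₀ ℝ) :=
  LinearEquiv.ofLinear (sig M k) (sig M k)
    (LinearMap.ext fun v => by rw [LinearMap.comp_apply, sig_sq]; rfl)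
    (LinearMap.ext fun v => by rw [LinearMap.comp_apply, sig_sq]; rfl)

theorem sigE_apply (k : B) (v : B →₀ ℝ) : sigE M k v = sig M k v := rfl


/-! ### The dihedral `2×2` computation -/

/-- Coordinate action of `σᵢσⱼ` on the plane spanned by `αᵢ, αⱼ`. -/
def p2 (c : ℝ) : ℝ × ℝ → ℝ × ℝ := fun z => ((4*c^2-1)*z.1 + 2*c*z.2, -(2*c*z.1) - z.2)

/-- Complex scalarization of the plane action. -/
noncomputable def gfun (c : ℝ) (l : ℂ) (z : ℝ × ℝ) : ℂ × ℂ :=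
  ((z.1:ℂ)*(1+l) + 2*(c:ℂ)*(z.2:ℂ), (z.1:ℂ)*(1+(starRingEnd ℂ) l) + 2*(c:ℂ)*(z.2:ℂ))

theorem gfun_p2 (c : ℝ) (l : ℂ) (hkey : (1+l)^2 = 4*(c:ℂ)^2*l) (z : ℝ × ℝ) :
    gfun c l (p2 c z) = (l * (gfun c l z).1, (starRingEnd ℂ) l * (gfun c l z).2) := by
  have hkey2 : (1+(starRingEnd ℂ) l)^2 = 4*(c:ℂ)^2*((starRingEnd ℂ) l) := by
    have := congrArg (starRingEnd ℂ) hkey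
    simpa [map_pow, map_add, map_mul, map_one, map_ofNat, Complex.conj_ofReal] using this
  unfold gfun p2
  refine Prod.ext ?_ ?_ <;> simp only <;> push_cast
  · linear_combination (-(z.1:ℂ)) * hkey
  · linear_combination (-(z.1:ℂ)) * hkey2

theorem gfun_p2_iter (c : ℝ) (l : ℂ) (hkey : (1+l)^2 = 4*(c:ℂ)^2*l) (n : ℕ) (z : ℝ × ℝ) :
    gfun c l ((p2 c)^[n] z)
      = (l^n * (gfun c l z).1, ((starRingEnd ℂ) l)^n * (gfun c l z).2) := by
  induction n with
  | zero => simp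
  | succ n ih =>
    rw [Function.iterate_succ_apply', gfun_p2 c l hkey, ih]
    refine Prod.ext ?_ ?_ <;> simp only <;> ring

theorem gfun_inj (c : ℝ) (l : ℂ) (hlm : l - (starRingEnd ℂ) l ≠ 0) (hc0 : c ≠ 0) :
    Function.Injective (gfun c l) := by
  intro z z' h
  unfold gfun at h
  have h1 := congrArg Prod.fst h
  have h2 := congrArg Prod.snd h
  simp only at h1 h2
  have h3 : ((z.1 : ℂ) - (z'.1 : ℂ)) * (l - (starRingEnd ℂ) l) = 0 := by
    linear_combination h1 - h2
  have h4 : (z.1 : ℂ) = (z'.1 : ℂ) := by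
    rcases mul_eq_zero.mp h3 with h | h
    · linear_combination h
    · exact absurd h hlm
  have h5 : z.1 = z'.1 := by exact_mod_cast h4
  have h6 : 2*(c:ℂ)*(z.2:ℂ) = 2*(c:ℂ)*(z'.2:ℂ) := by
    rw [h4] at h1
    linear_combination h1
  have h7 : (z.2 : ℂ) = (z'.2 : ℂ) := by
    have hc2 : (2*(c:ℂ)) ≠ 0 := by
      apply mul_ne_zero two_ne_zero
      exact_mod_cast hc0
    exact mul_left_cancel₀ hc2 h6
  have h8 : z.2 = z'.2 := by exact_mod_cast h7
  exact Prod.ext h5 h8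

theorem p2_iter_eq_id (c : ℝ) (m : ℕ) (hm : 2 ≤ m) (hc : c = -Real.cos (Real.pi / m))
    (z : ℝ × ℝ) : (p2 c)^[m] z = z := by
  rcases eq_or_lt_of_le hm with h2 | h3
  · -- m = 2
    subst hc
    rw [← h2]
    have hcz : -Real.cos (Real.pi / ((2:ℕ):ℝ)) = 0 := by
      norm_num [Real.cos_pi_div_two]
    rw [hcz]
    show p2 0 (p2 0 z) = z
    unfold p2
    norm_num
  · -- m ≥ 3
    have hm3 : 3 ≤ m := h3
    have hmR : (0:ℝ) < (m:ℝ) := by positivity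
    set θ : ℝ := Real.pi / m with hθ
    have hθpos : 0 < θ := by
      apply div_pos Real.pi_pos hmR
    have hθlt : θ < Real.pi / 2 := by
      rw [hθ]
      apply div_lt_div_of_pos_left Real.pi_pos (by norm_num)
      exact_mod_cast by omega
    set ct : ℂ := ((θ : ℝ) : ℂ) with hct
    set l : ℂ := Complex.exp (2*ct*Complex.I) with hl
    have hexp : Complex.exp (ct*Complex.I) * Complex.exp (ct*Complex.I) = l := by
      rw [← Complex.exp_add, hl]
      ring_nf
    have hx : Complex.exp (ct*Complex.I) * Complex.exp (-(ct*Complex.I)) = 1 := by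
      rw [← Complex.exp_add, show ct*Complex.I + -(ct*Complex.I) = 0 by ring,
        Complex.exp_zero]
    have e1 : Complex.exp (ct*Complex.I)
        = ((Real.cos θ : ℝ) : ℂ) + ((Real.sin θ : ℝ) : ℂ) * Complex.I := by
      rw [hct, Complex.exp_mul_I, ← Complex.ofReal_cos, ← Complex.ofReal_sin]
    have e2 : Complex.exp (-(ct*Complex.I))
        = ((Real.cos θ : ℝ) : ℂ) - ((Real.sin θ : ℝ) : ℂ) * Complex.I := by
      rw [show -(ct*Complex.I) = (-ct)*Complex.I by ring, Complex.exp_mul_I,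
        Complex.cos_neg, Complex.sin_neg, hct, ← Complex.ofReal_cos, ← Complex.ofReal_sin]
      ring
    have hcos : (1:ℂ) + l = Complex.exp (ct*Complex.I) * (2 * ((Real.cos θ : ℝ) : ℂ)) := by
      calc (1:ℂ) + l
          = Complex.exp (ct*Complex.I) * Complex.exp (-(ct*Complex.I))
            + Complex.exp (ct*Complex.I) * Complex.exp (ct*Complex.I) := by rw [hx, hexp]
        _ = Complex.exp (ct*Complex.I)
            * (Complex.exp (ct*Complex.I) + Complex.exp (-(ct*Complex.I))) := by ring
        _ = _ := by rw [e1, e2]; ring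
    have hkey : (1+l)^2 = 4*(c:ℂ)^2*l := by
      rw [hcos, mul_pow, hc]
      push_cast
      rw [show (Complex.exp (ct*Complex.I))^2 = l by rw [sq]; exact hexp]
      ring
    have hθm : (m:ℝ) * θ = Real.pi := by
      rw [hθ]
      field_simp
    have hlm : l^m = 1 := by
      rw [hl, ← Complex.exp_nat_mul]
      have hcast : ((m:ℕ):ℂ) * (2*ct*Complex.I) = 2*(Real.pi:ℂ)*Complex.I := by
        have h' := congrArg (fun x : ℝ => (x:ℂ)) hθm
        simp only [Complex.ofReal_mul, Complex.ofReal_natCast] at h'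
        rw [hct]
        linear_combination 2*Complex.I*h'
      rw [hcast]
      exact Complex.exp_two_pi_mul_I
    have hlmc : ((starRingEnd ℂ) l)^m = 1 := by
      rw [← map_pow, hlm, map_one]
    have hsin : Real.sin (2*θ) ≠ 0 := by
      apply ne_of_gt
      apply Real.sin_pos_of_pos_of_lt_pi
      · linarith
      · linarith
    have f1 : l = ((Real.cos (2*θ) : ℝ) : ℂ) + ((Real.sin (2*θ) : ℝ) : ℂ) * Complex.I := by
      rw [hl, show 2*ct*Complex.I = ((2*θ : ℝ) : ℂ)*Complex.I by rw [hct]; push_cast; ring,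
        Complex.exp_mul_I, ← Complex.ofReal_cos, ← Complex.ofReal_sin]
    have f2 : (starRingEnd ℂ) l
        = ((Real.cos (2*θ) : ℝ) : ℂ) - ((Real.sin (2*θ) : ℝ) : ℂ) * Complex.I := by
      rw [f1, map_add, map_mul, Complex.conj_ofReal, Complex.conj_ofReal, Complex.conj_I]
      ring
    have hne : l - (starRingEnd ℂ) l ≠ 0 := by
      intro hcontra
      apply hsin
      rw [f2, f1] at hcontra
      have h2 : ((Real.sin (2*θ) : ℝ) : ℂ) * Complex.I = 0 := by
        linear_combination hcontra / 2
      rcases mul_eq_zero.mp h2 with h | h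
      · exact_mod_cast h
      · exact absurd h Complex.I_ne_zero
    have hc0 : c ≠ 0 := by
      rw [hc]
      have hcosθ : 0 < Real.cos θ := Real.cos_pos_of_mem_Ioo ⟨by linarith, hθlt⟩
      rw [hθ] at hcosθ
      intro h
      rw [neg_eq_zero] at h
      linarith
    apply gfun_inj c l hne hc0
    rw [gfun_p2_iter c l hkey m z, hlm, hlmc, one_mul, one_mul]

end StmtAux2

namespace StmtAux2
variable {B : Type*} (M : CoxeterMatrix B)

theorem act (i j : B) (x y : ℝ) :
    sig M i (sig M j (x • Finsupp.single i 1 + y • Finsupp.single j 1))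
      = (p2 (CM M i j) (x,y)).1 • Finsupp.single i 1
        + (p2 (CM M i j) (x,y)).2 • Finsupp.single j 1 := by
  have hsymm : CM M j i = CM M i j := CM_symm M j i
  simp only [sig_apply, map_add, map_smul, map_sub, bf_single, CM_diag, hsymm, p2,
    smul_eq_mul, smul_sub, smul_smul, sub_smul, add_smul, mul_one]
  module

theorem pow_fix {V : Type*} [AddCommGroup V] [Module ℝ V] (P : V ≃ₗ[ℝ] V) (v : V)
    (h : P v = v) (n : ℕ) : (P ^ n) v = v := by
  induction n with
  | zero => rfl
  | succ n ih =>
    rw [pow_succ']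
    show P ((P ^ n) v) = v
    rw [ih, h]

theorem sigE_liftable : M.IsLiftable (fun k => sigE M k) := by
  intro i j
  rcases Nat.eq_zero_or_pos (M i j) with h0 | hpos
  · rw [h0, pow_zero]
  rcases eq_or_lt_of_le (show 1 ≤ M i j from hpos) with h1 | h2
  · -- M i j = 1, forcing i = j
    have hij : i = j := by
      by_contra hne
      exact (M.off_diagonal i j hne) h1.symm
    subst hij
    rw [← h1, pow_one]
    refine DFunLike.ext _ _ fun v => ?_
    show sig M i (sig M i v) = v
    exact sig_sq M i v
  · -- M i j ≥ 2
    set m := M i j with hm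
    set c := CM M i j with hcdef
    have hc : c = -Real.cos (Real.pi / m) := rfl
    have hm2 : 2 ≤ m := h2
    set P := sigE M i * sigE M j with hP
    have hPapp : ∀ v, P v = sig M i (sig M j v) := fun v => rfl
    have itercoord : ∀ (n : ℕ) (x y : ℝ),
        (P ^ n) (x • Finsupp.single i 1 + y • Finsupp.single j 1)
          = ((p2 c)^[n] (x,y)).1 • Finsupp.single i 1
            + ((p2 c)^[n] (x,y)).2 • Finsupp.single j 1 := by
      intro n
      induction n with
      | zero => intro x y; simp
      | succ n ih =>
        intro x y
        rw [pow_succ']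
        show P ((P ^ n) (_ + _)) = _
        rw [ih x y, hPapp, act, Function.iterate_succ_apply']
    -- trigonometric nondegeneracy
    have hθpos : 0 < Real.pi / m := by
      apply div_pos Real.pi_pos
      exact_mod_cast by omega
    have hθle : Real.pi / m < Real.pi := by
      rw [div_lt_iff₀ (by exact_mod_cast (by omega : 0 < m))]
      nlinarith [Real.pi_pos, show (2:ℝ) ≤ (m:ℝ) from by exact_mod_cast hm2]
    have hsin : Real.sin (Real.pi / m) ≠ 0 :=
      ne_of_gt (Real.sin_pos_of_pos_of_lt_pi hθpos hθle)
    have hd : 1 - c^2 ≠ 0 := by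
      have : 1 - c^2 = Real.sin (Real.pi / m)^2 := by
        rw [hc, Real.sin_sq]
        ring
      rw [this]
      positivity
    refine DFunLike.ext _ _ fun v => ?_
    show (P ^ m) v = v
    set A1 := bf M i v with hA1
    set A2 := bf M j v with hA2
    set a := (A1 - c*A2)/(1-c^2) with ha
    set b := (A2 - c*A1)/(1-c^2) with hb
    set w := v - a • Finsupp.single i 1 - b • Finsupp.single j 1 with hw
    have hsymm : CM M j i = c := CM_symm M j i
    have hwi : bf M i w = 0 := by
      rw [hw]
      simp only [map_sub, map_smul, bf_single, CM_diag, smul_eq_mul, mul_one, ← hA1, ← hcdef]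
      rw [ha, hb]
      field_simp
      ring
    have hwj : bf M j w = 0 := by
      rw [hw]
      simp only [map_sub, map_smul, bf_single, CM_diag, smul_eq_mul, mul_one, hsymm, ← hA2]
      rw [ha, hb]
      field_simp
      ring
    have hfi : sig M i w = w := by
      rw [sig_apply, hwi]
      simp
    have hfj : sig M j w = w := by
      rw [sig_apply, hwj]
      simp
    have hPw : P w = w := by rw [hPapp, hfj, hfi]
    have hdecomp : v = w + (a • Finsupp.single i 1 + b • Finsupp.single j 1) := by
      rw [hw]
      abel
    calc (P ^ m) v
        = (P ^ m) w + (P ^ m) (a • Finsupp.single i 1 + b • Finsupp.single j 1) := by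
          rw [hdecomp, map_add]
      _ = w + (a • Finsupp.single i 1 + b • Finsupp.single j 1) := by
          rw [pow_fix P w hPw m, itercoord m a b, p2_iter_eq_id c m hm2 hc]
      _ = v := hdecomp.symm

theorem simple_injective {W : Type*} [Group W] {M : CoxeterMatrix B}
    (cs : CoxeterSystem M W) : Function.Injective cs.simple := by
  intro i j hij
  by_contra hne
  have h := congrArg (cs.lift ⟨fun k => sigE M k, sigE_liftable M⟩) hij
  rw [cs.lift_apply_simple, cs.lift_apply_simple] at h
  have h2 : sig M i (Finsupp.single i 1) = sig M j (Finsupp.single i 1) :=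
    congrFun (congrArg (fun (e : (B →₀ ℝ) ≃ₗ[ℝ] (B →₀ ℝ)) => ⇑e) h) (Finsupp.single i 1)
  rw [sig_apply, sig_apply, bf_single, bf_single, CM_diag] at h2
  have h3 := congrArg (fun f : B →₀ ℝ => f i) h2
  simp only [Finsupp.coe_sub, Finsupp.coe_smul, Pi.sub_apply, Pi.smul_apply,
    Finsupp.single_eq_same, Finsupp.single_eq_of_ne hne, smul_eq_mul,
    mul_one, mul_zero] at h3
  norm_num at h3

end StmtAux2


open CoxeterSystem in
/-- Let `(i_k)_{k ∈ ℤ}` be a bi-infinite sequence in `I` such that every window of `ℓ`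
consecutive entries is a reduced expression of the longest element `w₀` of a finite
Weyl group.  Then `i_{k+ℓ} = i_k*` for all `k`, where the involution `*` is
characterized (equivalently to `α_{i*} = −w₀(α_i)`) by `s_{i*} = w₀ s_i w₀⁻¹`;
in particular the sequence is periodic of period `2ℓ`. -/
theorem stmt15 {B W : Type*} [Group W] {M : CoxeterMatrix B} (cs : CoxeterSystem M W)
    [Finite W] (w₀ : W) (hw₀ : ∀ w : W, cs.length w ≤ cs.length w₀)
    (ℓ : ℕ) (hℓ : ℓ = cs.length w₀)
    (idx : ℤ → B)
    (hred : ∀ k : ℤ, cs.IsReduced (List.ofFn fun t : Fin ℓ => idx (k + (t : ℕ))))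
    (hprod : ∀ k : ℤ, cs.wordProd (List.ofFn fun t : Fin ℓ => idx (k + (t : ℕ))) = w₀) :
    (∀ k : ℤ, cs.simple (idx (k + (ℓ : ℤ))) = w₀ * cs.simple (idx k) * w₀⁻¹) ∧
    (∀ k : ℤ, idx (k + 2 * (ℓ : ℤ)) = idx k) := by
  classical
  have hsq : w₀ * w₀ = 1 := StmtAux.longest_square cs hw₀
  have hinv : w₀⁻¹ = w₀ := by
    rw [inv_eq_iff_mul_eq_one, hsq]
  -- the key relation
  have key : ∀ k : ℤ, cs.simple (idx (k + (ℓ : ℤ))) = w₀⁻¹ * cs.simple (idx k) * w₀ := by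
    cases ℓ with
    | zero =>
      intro k
      have h1 := hprod 0
      simp only [List.ofFn_zero, cs.wordProd_nil] at h1
      rw [← h1]
      simp
    | succ n =>
      intro k
      have h1 := hprod k
      have h2 := hprod (k+1)
      rw [List.ofFn_succ, cs.wordProd_cons] at h1
      rw [List.ofFn_succ', cs.wordProd_concat] at h2
      have hmid : (List.ofFn fun t : Fin n => idx (k + (((t.succ : Fin (n+1))) : ℕ)))
          = (List.ofFn fun t : Fin n => idx ((k+1) + ((t.castSucc : Fin (n+1)) : ℕ))) := by
        refine congrArg List.ofFn (funext fun t => ?_)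
        congr 1
        push_cast [Fin.val_succ, Fin.coe_castSucc]
        ring
      have hhead : idx (k + (((0 : Fin (n+1))) : ℕ)) = idx k := by
        norm_num
      rw [hmid, hhead] at h1
      have hlast : idx ((k+1) + (((Fin.last n) : Fin (n+1)) : ℕ)) = idx (k + ((n:ℤ)+1)) := by
        congr 1
        rw [Fin.val_last]
        ring
      rw [hlast] at h2
      have hm : cs.wordProd (List.ofFn fun t : Fin n => idx ((k+1) + ((t.castSucc : Fin (n+1)) : ℕ)))
          = (cs.simple (idx k))⁻¹ * w₀ := by
        rw [← h1]
        group
      rw [hm] at h2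
      have : cs.simple (idx (k + ((n:ℤ)+1))) = w₀⁻¹ * cs.simple (idx k) * w₀ := by
        calc cs.simple (idx (k + ((n:ℤ)+1)))
            = w₀⁻¹ * cs.simple (idx k)
              * ((cs.simple (idx k))⁻¹ * w₀ * cs.simple (idx (k + ((n:ℤ)+1)))) := by group
          _ = w₀⁻¹ * cs.simple (idx k) * w₀ := by rw [h2]
      rw [show (k + ((n:ℕ)+1 : ℕ) : ℤ) = k + ((n:ℤ)+1) by push_cast; ring]
      exact this
  constructor
  · intro k
    rw [key k, hinv]
  · intro k
    apply StmtAux2.simple_injective cs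
    have e2 := key (k + (ℓ:ℤ))
    have e1 := key k
    rw [show (k + 2 * (ℓ:ℤ)) = k + (ℓ:ℤ) + (ℓ:ℤ) by ring, e2, e1]
    calc w₀⁻¹ * (w₀⁻¹ * cs.simple (idx k) * w₀) * w₀
        = (w₀ * w₀)⁻¹ * cs.simple (idx k) * (w₀ * w₀) := by group
      _ = cs.simple (idx k) := by rw [hsq]; group
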